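/- arXiv:2101.06276 — 2 statements merged into one kernel-verified Lean document; each statement's English description precedes it below -/
import Mathlib

section
/- Let V be a finite-dimensional representation of a finite group G over a field of characteristic 0, and let g, h ∈ G. Then the quotient of V ⊕ V ⊕ V ⊕ V by the subspace spanned by all vectors of the form (v,v,v,v), (v, g·v, 0, 0), and (0, 0, v, h·v) is linearly isomorphic to V_g ⊕ V_h ⊕ V/(V^g + V^h). -/
/-- The quotient of `V⁴` by the span of the vectors `(v,v,v,v)`, `(v,g·v,0,0)`, `(0,0,v,h·v)`
is linearly isomorphic to `V_g ⊕ V_h ⊕ V/(V^g + V^h)`. -/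
theorem quad_quotient_iso
    {k V G : Type*} [Field k] [CharZero k] [AddCommGroup V] [Module k V]
    [FiniteDimensional k V] [Group G] [Finite G]
    (ρ : Representation k G V) (g h : G) :
    Nonempty
      (((V × V × V × V) ⧸ Submodule.span k
          ({x : V × V × V × V | ∃ v : V, x = (v, v, v, v)} ∪
            {x : V × V × V × V | ∃ v : V, x = (v, ρ g v, 0, 0)} ∪
            {x : V × V × V × V | ∃ v : V, x = (0, 0, v, ρ h v)})) ≃ₗ[k]
        ((V ⧸ LinearMap.range ((1 : V →ₗ[k] V) - ρ g)) ×
          (V ⧸ LinearMap.range ((1 : V →ₗ[k] V) - ρ h)) ×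
          (V ⧸ (LinearMap.ker (ρ g - (1 : V →ₗ[k] V)) ⊔
            LinearMap.ker (ρ h - (1 : V →ₗ[k] V)))))) := by
  classical
  set n := Module.finrank k V with hn
  set d1 : V →ₗ[k] V × V × V × V :=
    LinearMap.prod LinearMap.id (LinearMap.prod LinearMap.id
      (LinearMap.prod LinearMap.id LinearMap.id)) with hd1
  set d2 : V →ₗ[k] V × V × V × V :=
    LinearMap.prod LinearMap.id (LinearMap.prod (ρ g) (LinearMap.prod 0 0)) with hd2
  set d3 : V →ₗ[k] V × V × V × V :=
    LinearMap.prod 0 (LinearMap.prod 0 (LinearMap.prod LinearMap.id (ρ h))) with hd3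
  set F : V × V × V →ₗ[k] V × V × V × V := d1.coprod (d2.coprod d3) with hF
  have hset : ({x : V × V × V × V | ∃ v : V, x = (v, v, v, v)} ∪
      {x : V × V × V × V | ∃ v : V, x = (v, ρ g v, 0, 0)} ∪
      {x : V × V × V × V | ∃ v : V, x = (0, 0, v, ρ h v)})
      = Set.range d1 ∪ Set.range d2 ∪ Set.range d3 := by
    simp only [hd1, hd2, hd3]
    congr 1
    · congr 1
      · ext x; simp [eq_comm, LinearMap.prod_apply, Prod.ext_iff]
      · ext x; simp [eq_comm, LinearMap.prod_apply, Prod.ext_iff]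
    · ext x; simp [eq_comm, LinearMap.prod_apply, Prod.ext_iff]
  have hspan : Submodule.span k
      ({x : V × V × V × V | ∃ v : V, x = (v, v, v, v)} ∪
        {x : V × V × V × V | ∃ v : V, x = (v, ρ g v, 0, 0)} ∪
        {x : V × V × V × V | ∃ v : V, x = (0, 0, v, ρ h v)}) = LinearMap.range F := by
    rw [hset, Submodule.span_union, Submodule.span_union,
      ← LinearMap.coe_range d1, ← LinearMap.coe_range d2, ← LinearMap.coe_range d3,
      Submodule.span_eq, Submodule.span_eq, Submodule.span_eq,
      hF, LinearMap.range_coprod, LinearMap.range_coprod, sup_assoc]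
  -- the kernel of F
  set K : Submodule k V := LinearMap.ker (ρ g - (1 : V →ₗ[k] V)) ⊓
      LinearMap.ker (ρ h - (1 : V →ₗ[k] V)) with hK
  set j : K →ₗ[k] V × V × V :=
    LinearMap.prod (-K.subtype) (LinearMap.prod K.subtype K.subtype) with hj
  have hmemK : ∀ x : V, x ∈ K ↔ ρ g x = x ∧ ρ h x = x := by
    intro x
    simp [hK, LinearMap.mem_ker, sub_eq_zero]
  have hjinj : Function.Injective j :=
    fun x y hxy => Subtype.ext (congrArg (fun p : V × V × V => p.2.1) hxy)
  have hkerF : LinearMap.ker F = LinearMap.range j := by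
    ext ⟨u, a, b⟩
    simp only [LinearMap.mem_ker, LinearMap.mem_range, hF, hj, LinearMap.coprod_apply,
      LinearMap.prod_apply, Function.prod_apply, LinearMap.id_apply,
      LinearMap.zero_apply, hd1, hd2, hd3, Prod.mk_add_mk, Prod.ext_iff,
      LinearMap.neg_apply, Submodule.coe_subtype, Prod.fst_zero, Prod.snd_zero,
      add_zero, zero_add]
    constructor
    · rintro ⟨h1, h2, h3, h4⟩
      have ha : a = -u := by rwa [add_comm, add_eq_zero_iff_eq_neg] at h1
      have hb : b = -u := by rwa [add_comm, add_eq_zero_iff_eq_neg] at h3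
      have hg2 : ρ g a = -u := by rwa [add_comm, add_eq_zero_iff_eq_neg] at h2
      have hh2 : ρ h b = -u := by rwa [add_comm, add_eq_zero_iff_eq_neg] at h4
      have hab : a = b := ha.trans hb.symm
      refine ⟨⟨a, (hmemK a).2 ⟨by rw [hg2, ha], by rw [hab, hh2, ← hb]⟩⟩, ?_, rfl, ?_⟩
      · show -a = u; rw [ha, neg_neg]
      · show a = b; exact hab
    · rintro ⟨c, hc1, hc2, hc3⟩
      obtain ⟨hcg, hch⟩ := (hmemK c).1 c.2
      refine ⟨?_, ?_, ?_, ?_⟩ <;> rw [← hc1]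
      · rw [← hc2]; abel
      · rw [← hc2, hcg]; abel
      · rw [← hc3]; abel
      · rw [← hc3, hch]; abel
  -- dimension bookkeeping
  have hkerdim : Module.finrank k (LinearMap.ker F) = Module.finrank k K := by
    rw [hkerF, LinearMap.finrank_range_of_inj hjinj]
  have h4n : Module.finrank k (V × V × V × V) = n + (n + (n + n)) := by
    simp [Module.finrank_prod, hn]
  have h3n : Module.finrank k (V × V × V) = n + (n + n) := by
    simp [Module.finrank_prod, hn]
  have hrankF := LinearMap.finrank_range_add_finrank_ker F
  rw [h3n, hkerdim] at hrankF
  have hQ := Submodule.finrank_quotient_add_finrank (LinearMap.range F)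
  rw [h4n] at hQ
  have hkg : LinearMap.ker ((1 : V →ₗ[k] V) - ρ g) = LinearMap.ker (ρ g - (1 : V →ₗ[k] V)) := by
    ext x
    simp only [LinearMap.mem_ker, LinearMap.sub_apply, Module.End.one_apply, sub_eq_zero]
    exact eq_comm
  have hkh : LinearMap.ker ((1 : V →ₗ[k] V) - ρ h) = LinearMap.ker (ρ h - (1 : V →ₗ[k] V)) := by
    ext x
    simp only [LinearMap.mem_ker, LinearMap.sub_apply, Module.End.one_apply, sub_eq_zero]
    exact eq_comm
  have hrg := LinearMap.finrank_range_add_finrank_ker ((1 : V →ₗ[k] V) - ρ g)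
  have hrh := LinearMap.finrank_range_add_finrank_ker ((1 : V →ₗ[k] V) - ρ h)
  rw [hkg] at hrg
  rw [hkh] at hrh
  have hQg := Submodule.finrank_quotient_add_finrank (LinearMap.range ((1 : V →ₗ[k] V) - ρ g))
  have hQh := Submodule.finrank_quotient_add_finrank (LinearMap.range ((1 : V →ₗ[k] V) - ρ h))
  have hQs := Submodule.finrank_quotient_add_finrank
    (LinearMap.ker (ρ g - (1 : V →ₗ[k] V)) ⊔ LinearMap.ker (ρ h - (1 : V →ₗ[k] V)))
  have hsi := Submodule.finrank_sup_add_finrank_inf_eq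
    (LinearMap.ker (ρ g - (1 : V →ₗ[k] V))) (LinearMap.ker (ρ h - (1 : V →ₗ[k] V)))
  rw [← hK] at hsi
  refine ⟨LinearEquiv.ofFinrankEq _ _ ?_⟩
  rw [hspan, Module.finrank_prod, Module.finrank_prod]
  omega
end

section
/- Let V be a finite-dimensional representation of a finite group G over a field of characteristic 0, and g, h ∈ G. There is a short exact sequence 0 → V/(V^g + V^h) → W → V_g ⊕ V_h → 0, where W is the quotient of V ⊕ V ⊕ V by the subspace spanned by all (v - g·v, v, 0) and (0, -v, v - h·v), with the surjection W → V_g ⊕ V_h induced by projection onto the first and third components. -/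
/-- Short exact sequence `0 → V/(V^g + V^h) → W → V_g ⊕ V_h → 0`, where `W` is the quotient of
`V³` by the span of all `(v - g·v, v, 0)` and `(0, -v, v - h·v)`; the injection sends the class
of `v` to the class of `(0, v, 0)` and the surjection is induced by projection onto the first
and third components. -/
theorem short_exact_triple_quotient
    {k V G : Type*} [Field k] [CharZero k] [AddCommGroup V] [Module k V]
    [FiniteDimensional k V] [Group G] [Finite G]
    (ρ : Representation k G V) (g h : G) :
    ∃ a : (V ⧸ (LinearMap.ker (ρ g - (1 : V →ₗ[k] V)) ⊔
          LinearMap.ker (ρ h - (1 : V →ₗ[k] V)))) →ₗ[k]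
        ((V × V × V) ⧸ Submodule.span k
          ({x : V × V × V | ∃ v : V, x = (v - ρ g v, v, 0)} ∪
            {x : V × V × V | ∃ v : V, x = (0, -v, v - ρ h v)})),
    ∃ b : ((V × V × V) ⧸ Submodule.span k
          ({x : V × V × V | ∃ v : V, x = (v - ρ g v, v, 0)} ∪
            {x : V × V × V | ∃ v : V, x = (0, -v, v - ρ h v)})) →ₗ[k]
        ((V ⧸ LinearMap.range ((1 : V →ₗ[k] V) - ρ g)) ×
          (V ⧸ LinearMap.range ((1 : V →ₗ[k] V) - ρ h))),
      Function.Injective a ∧ Function.Surjective b ∧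
      LinearMap.range a = LinearMap.ker b ∧
      (∀ v : V,
        a ((LinearMap.ker (ρ g - (1 : V →ₗ[k] V)) ⊔
            LinearMap.ker (ρ h - (1 : V →ₗ[k] V))).mkQ v) =
          (Submodule.span k
            ({x : V × V × V | ∃ v : V, x = (v - ρ g v, v, 0)} ∪
              {x : V × V × V | ∃ v : V, x = (0, -v, v - ρ h v)})).mkQ (0, v, 0)) ∧
      (∀ v₁ v₂ v₃ : V,
        b ((Submodule.span k
            ({x : V × V × V | ∃ v : V, x = (v - ρ g v, v, 0)} ∪
              {x : V × V × V | ∃ v : V, x = (0, -v, v - ρ h v)})).mkQ (v₁, v₂, v₃)) =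
          ((LinearMap.range ((1 : V →ₗ[k] V) - ρ g)).mkQ v₁,
            (LinearMap.range ((1 : V →ₗ[k] V) - ρ h)).mkQ v₃)) := by
  classical
  set Kg := LinearMap.ker (ρ g - (1 : V →ₗ[k] V)) with hKg
  set Kh := LinearMap.ker (ρ h - (1 : V →ₗ[k] V)) with hKh
  set Rg := LinearMap.range ((1 : V →ₗ[k] V) - ρ g) with hRg
  set Rh := LinearMap.range ((1 : V →ₗ[k] V) - ρ h) with hRh
  set S1 : Set (V × V × V) := {x : V × V × V | ∃ v : V, x = (v - ρ g v, v, 0)} with hS1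
  set S2 : Set (V × V × V) := {x : V × V × V | ∃ v : V, x = (0, -v, v - ρ h v)} with hS2
  set S : Submodule k (V × V × V) := Submodule.span k (S1 ∪ S2) with hS
  -- linear maps whose ranges are the two generating sets
  set f1 : V →ₗ[k] V × V × V :=
    (LinearMap.id - ρ g).prod (LinearMap.id.prod 0) with hf1
  set f2 : V →ₗ[k] V × V × V :=
    (0 : V →ₗ[k] V).prod ((-LinearMap.id).prod (LinearMap.id - ρ h)) with hf2
  have hf1v : ∀ v : V, f1 v = (v - ρ g v, v, 0) := fun v => rfl
  have hf2v : ∀ v : V, f2 v = (0, -v, v - ρ h v) := fun v => rfl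
  have hS1r : S1 = Set.range f1 := by
    ext x; constructor
    · rintro ⟨v, rfl⟩; exact ⟨v, rfl⟩
    · rintro ⟨v, rfl⟩; exact ⟨v, rfl⟩
  have hS2r : S2 = Set.range f2 := by
    ext x; constructor
    · rintro ⟨v, rfl⟩; exact ⟨v, rfl⟩
    · rintro ⟨v, rfl⟩; exact ⟨v, rfl⟩
  have hSr : S = LinearMap.range (f1.coprod f2) := by
    rw [hS, Submodule.span_union, hS1r, hS2r, ← LinearMap.coe_range f1,
      ← LinearMap.coe_range f2, Submodule.span_eq, Submodule.span_eq, LinearMap.range_coprod]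
  have hmemS : ∀ x : V × V × V, x ∈ S ↔ ∃ u w : V, x = f1 u + f2 w := by
    intro x
    rw [hSr, LinearMap.mem_range]
    constructor
    · rintro ⟨⟨u, w⟩, rfl⟩; exact ⟨u, w, rfl⟩
    · rintro ⟨u, w, rfl⟩; exact ⟨(u, w), rfl⟩
  -- the map v ↦ (0, v, 0)
  set m0 : V →ₗ[k] V × V × V := (0 : V →ₗ[k] V).prod (LinearMap.id.prod 0) with hm0
  have hm0v : ∀ v : V, m0 v = (0, v, 0) := fun v => rfl
  have hker_a : Kg ⊔ Kh ≤ LinearMap.ker (S.mkQ.comp m0) := by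
    apply sup_le
    · intro v hv
      have hv' : ρ g v - v = 0 := hv
      simp only [LinearMap.mem_ker, LinearMap.comp_apply, hm0v, Submodule.mkQ_apply,
        Submodule.Quotient.mk_eq_zero]
      have : ((0 : V), v, (0 : V)) ∈ S1 := ⟨v, by
        have : v - ρ g v = 0 := by
          have := hv'; abel_nf; abel_nf at this
          linear_combination (norm := module) -this
        simp [this]⟩
      exact Submodule.subset_span (Or.inl this)
    · intro v hv
      have hv' : ρ h v - v = 0 := hv
      simp only [LinearMap.mem_ker, LinearMap.comp_apply, hm0v, Submodule.mkQ_apply,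
        Submodule.Quotient.mk_eq_zero]
      have hmem2 : ((0 : V), -v, v - ρ h v) ∈ S2 := ⟨v, rfl⟩
      have h0 : v - ρ h v = 0 := by linear_combination (norm := module) -hv'
      have : ((0 : V), v, (0 : V)) = -((0 : V), -v, v - ρ h v) := by
        simp [Prod.ext_iff, h0]
      rw [this]
      exact Submodule.neg_mem _ (Submodule.subset_span (Or.inr hmem2))
  set a : (V ⧸ (Kg ⊔ Kh)) →ₗ[k] ((V × V × V) ⧸ S) :=
    Submodule.liftQ (Kg ⊔ Kh) (S.mkQ.comp m0) hker_a with ha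
  -- the projection map
  set p : (V × V × V) →ₗ[k] (V ⧸ Rg) × (V ⧸ Rh) :=
    (Rg.mkQ.comp (LinearMap.fst k V (V × V))).prod
      (Rh.mkQ.comp ((LinearMap.snd k V V).comp (LinearMap.snd k V (V × V)))) with hp
  have hpv : ∀ x : V × V × V, p x = (Rg.mkQ x.1, Rh.mkQ x.2.2) := fun x => rfl
  have hker_b : S ≤ LinearMap.ker p := by
    rw [hS]
    rw [Submodule.span_le]
    rintro x (⟨v, rfl⟩ | ⟨v, rfl⟩)
    · simp only [SetLike.mem_coe, LinearMap.mem_ker, hpv, Prod.mk_eq_zero]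
      constructor
      · rw [Submodule.mkQ_apply, Submodule.Quotient.mk_eq_zero]
        exact ⟨v, rfl⟩
      · simp
    · simp only [SetLike.mem_coe, LinearMap.mem_ker, hpv, Prod.mk_eq_zero]
      constructor
      · simp
      · rw [Submodule.mkQ_apply, Submodule.Quotient.mk_eq_zero]
        exact ⟨v, rfl⟩
  set b : ((V × V × V) ⧸ S) →ₗ[k] (V ⧸ Rg) × (V ⧸ Rh) := Submodule.liftQ S p hker_b with hb
  have haval : ∀ v : V, a ((Kg ⊔ Kh).mkQ v) = S.mkQ (0, v, 0) := by
    intro v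
    rw [ha, Submodule.mkQ_apply, Submodule.liftQ_apply, LinearMap.comp_apply, hm0v]
  have hbval : ∀ x : V × V × V, b (S.mkQ x) = (Rg.mkQ x.1, Rh.mkQ x.2.2) := by
    intro x
    rw [hb, Submodule.mkQ_apply, Submodule.liftQ_apply, hpv]
  refine ⟨a, b, ?_, ?_, ?_, haval, fun v₁ v₂ v₃ => hbval (v₁, v₂, v₃)⟩
  · -- injectivity of a
    rw [← LinearMap.ker_eq_bot, eq_bot_iff]
    rintro x hx
    obtain ⟨v, rfl⟩ := Submodule.mkQ_surjective _ x
    rw [LinearMap.mem_ker, haval, Submodule.mkQ_apply, Submodule.Quotient.mk_eq_zero,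
      hmemS] at hx
    obtain ⟨u, w, huw⟩ := hx
    rw [hf1v, hf2v, Prod.ext_iff, Prod.ext_iff] at huw
    obtain ⟨h1, h2, h3⟩ := huw
    simp only [Prod.fst_add, Prod.snd_add] at h1 h2 h3
    have hu : u ∈ Kg := by
      rw [hKg, LinearMap.mem_ker]
      have : u - ρ g u = 0 := by
        have := h1; linear_combination (norm := module) -this
      simp only [LinearMap.sub_apply, Module.End.one_apply]
      linear_combination (norm := module) -this
    have hw : -w ∈ Kh := by
      rw [hKh, LinearMap.mem_ker]
      have h0 : w - ρ h w = 0 := by linear_combination (norm := module) -h3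
      simp only [LinearMap.sub_apply, Module.End.one_apply, map_neg]
      linear_combination (norm := module) h0
    have hv : v ∈ Kg ⊔ Kh := by
      rw [Submodule.mem_sup]
      exact ⟨u, hu, -w, hw, by linear_combination (norm := module) -h2⟩
    simp only [Submodule.mem_bot, Submodule.mkQ_apply, Submodule.Quotient.mk_eq_zero]
    exact hv
  · -- surjectivity of b
    rintro ⟨x, y⟩
    obtain ⟨u, rfl⟩ := Submodule.mkQ_surjective Rg x
    obtain ⟨w, rfl⟩ := Submodule.mkQ_surjective Rh y
    exact ⟨S.mkQ (u, 0, w), hbval (u, 0, w)⟩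
  · -- range a = ker b
    apply le_antisymm
    · rintro x ⟨y, rfl⟩
      obtain ⟨v, rfl⟩ := Submodule.mkQ_surjective _ y
      rw [LinearMap.mem_ker, haval, hbval]
      simp
    · rintro x hx
      obtain ⟨⟨v₁, v₂, v₃⟩, rfl⟩ := Submodule.mkQ_surjective _ x
      rw [LinearMap.mem_ker, hbval, Prod.mk_eq_zero, Submodule.mkQ_apply,
        Submodule.mkQ_apply, Submodule.Quotient.mk_eq_zero, Submodule.Quotient.mk_eq_zero] at hx
      obtain ⟨⟨u, hu⟩, ⟨w, hw⟩⟩ := hx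
      refine ⟨(Kg ⊔ Kh).mkQ (v₂ - u + w), ?_⟩
      rw [haval, Submodule.mkQ_apply, Submodule.mkQ_apply, Submodule.Quotient.eq]
      rw [hmemS]
      refine ⟨-u, -w, ?_⟩
      rw [hf1v, hf2v, Prod.ext_iff, Prod.ext_iff]
      simp only [LinearMap.sub_apply, Module.End.one_apply] at hu hw
      simp only [Prod.fst_sub, Prod.snd_sub, Prod.fst_add, Prod.snd_add, map_neg, neg_neg]
      refine ⟨?_, ?_, ?_⟩
      · linear_combination (norm := module) hu
      · abel
      · linear_combination (norm := module) hw
end
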